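/- If additionally βħω → ∞ for both β_H and β_C (low temperature limit), then the Stirling cycle efficiency η = W_cyc/Q_H converges to the Carnot efficiency 1 − β_H/β_C. -/

import Mathlib

open Real Filter Finset

lemma aux_tendsto (a : ℝ) (ha : 0 < a) :
    Filter.Tendsto (fun x : ℝ => x / (Real.exp (a * x) - 1)) atTop (nhds 0) := by
  have h1 : Tendsto (fun x : ℝ => x * Real.exp (-a * x)) atTop (nhds 0) := by
    have := tendsto_rpow_mul_exp_neg_mul_atTop_nhds_zero 1 a ha
    refine this.congr' ?_
    filter_upwards [eventually_gt_atTop (0:ℝ)] with x hx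
    rw [Real.rpow_one]
  have h2 : Tendsto (fun x : ℝ => 1 - Real.exp (-a * x)) atTop (nhds 1) := by
    have : Tendsto (fun x : ℝ => Real.exp (-a * x)) atTop (nhds 0) := by
      have : Tendsto (fun x : ℝ => -a * x) atTop atBot :=
        tendsto_id.const_mul_atTop_of_neg (by linarith)
      exact Real.tendsto_exp_atBot.comp this
    simpa using (tendsto_const_nhds.sub this)
  have h3 := h1.div h2 one_ne_zero
  simp only [zero_div] at h3
  refine h3.congr' ?_
  filter_upwards [eventually_gt_atTop (0:ℝ)] with x hx
  have hax : 0 < a * x := mul_pos ha hx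
  have he : Real.exp (-a * x) ≠ 0 := (Real.exp_pos _).ne'
  have h1lt : 1 < Real.exp (a * x) := by
    rw [show (1:ℝ) = Real.exp 0 by simp]; exact Real.exp_lt_exp.mpr hax
  simp only [Pi.div_apply]
  rw [div_eq_div_iff]
  · have key : Real.exp (-a * x) * Real.exp (a * x) = 1 := by
      rw [← Real.exp_add]; simp
    nlinarith [key]
  · intro hc; rw [sub_eq_zero] at hc
    have := Real.exp_pos (-a * x)
    have hlt : Real.exp (-a * x) < 1 := by
      rw [show (1:ℝ) = Real.exp 0 by simp]
      exact Real.exp_lt_exp.mpr (by nlinarith)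
    linarith [hc.symm]
  · linarith

theorem stirling_carnot_efficiency (βH βC h : ℝ) (hβH : 0 < βH) (hβ : βH < βC)
    (hh : 0 < h) (N : ℕ) :
    Filter.Tendsto
      (fun hbarω : ℝ =>
        ((1 / βH - 1 / βC) * h) /
          ((1 / βH) * h + ∑ k ∈ Finset.Icc 1 N,
            ((k : ℝ) * hbarω / (Real.exp ((k : ℝ) * βH * hbarω) - 1)
              - (k : ℝ) * hbarω / (Real.exp ((k : ℝ) * βC * hbarω) - 1))))
      Filter.atTop (nhds (1 - βH / βC)) := by
  have hβC : 0 < βC := lt_trans hβH hβ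
  have hterm : ∀ (β : ℝ), 0 < β → ∀ k ∈ Finset.Icc 1 N,
      Tendsto (fun x : ℝ => (k : ℝ) * x / (Real.exp ((k : ℝ) * β * x) - 1)) atTop (nhds 0) := by
    intro β hβ' k hk
    have hk1 : 1 ≤ k := (Finset.mem_Icc.mp hk).1
    have hkpos : (0:ℝ) < (k:ℝ) := by exact_mod_cast hk1
    have := (aux_tendsto ((k:ℝ) * β) (mul_pos hkpos hβ')).const_mul (k:ℝ)
    simpa [mul_div_assoc] using this
  have hsum : Tendsto (fun x : ℝ => ∑ k ∈ Finset.Icc 1 N,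
      ((k : ℝ) * x / (Real.exp ((k : ℝ) * βH * x) - 1)
        - (k : ℝ) * x / (Real.exp ((k : ℝ) * βC * x) - 1))) atTop (nhds 0) := by
    have : Tendsto (fun x : ℝ => ∑ k ∈ Finset.Icc 1 N,
        ((k : ℝ) * x / (Real.exp ((k : ℝ) * βH * x) - 1)
          - (k : ℝ) * x / (Real.exp ((k : ℝ) * βC * x) - 1))) atTop
        (nhds (∑ k ∈ Finset.Icc 1 N, (0:ℝ))) := by
      apply tendsto_finset_sum
      intro k hk
      simpa using (hterm βH hβH k hk).sub (hterm βC hβC k hk)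
    simpa using this
  have hdenom : Tendsto (fun x : ℝ => (1 / βH) * h + ∑ k ∈ Finset.Icc 1 N,
      ((k : ℝ) * x / (Real.exp ((k : ℝ) * βH * x) - 1)
        - (k : ℝ) * x / (Real.exp ((k : ℝ) * βC * x) - 1))) atTop (nhds ((1 / βH) * h)) := by
    simpa using (tendsto_const_nhds.add hsum)
  have hne : (1 / βH) * h ≠ 0 := by positivity
  have := (tendsto_const_nhds (x := ((1 / βH - 1 / βC) * h)) (f := atTop (α := ℝ))).div hdenom hne
  convert this using 2
  · rfl
  · field_simp
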